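/- For every γ ∈ (0,1) and every λ < log 2, the function Λ_γ admits the expansion Λ_γ(λ) = −λ + Σ_{n=1}^∞ (1 − e^λ)^n · Σ_{k=1}^n ((−1)^k / k^{1−γ}) · binom(n−1, k−1). -/

import Mathlib

open Filter Topology

open MeasureTheory Set Real Finset

lemma aux_integrable {γ : ℝ} (hγ0 : 0 < γ) (hγ1 : γ < 1) {h : ℝ → ℝ} {c : ℝ} (hc : 0 ≤ c)
    (hcont : ContinuousOn h (Set.Ioi 0))
    (hb : ∀ s ∈ Set.Ioi (0:ℝ), |h s| ≤ c * min s 1) :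
    MeasureTheory.IntegrableOn (fun s => h s / s ^ (1+γ)) (Set.Ioi 0) := by
  have hmeas : ContinuousOn (fun s : ℝ => h s / s ^ (1+γ)) (Set.Ioi 0) := by
    apply hcont.div (ContinuousOn.rpow_const continuousOn_id (fun x hx => Or.inl (ne_of_gt hx)))
    intro x hx
    exact (Real.rpow_pos_of_pos hx _).ne'
  rw [show Set.Ioi (0:ℝ) = Set.Ioc 0 1 ∪ Set.Ioi 1 from (Set.Ioc_union_Ioi_eq_Ioi zero_le_one).symm]
  apply MeasureTheory.IntegrableOn.union
  · -- on Ioc 0 1, dominate by c * s^(-γ)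
    have hg : MeasureTheory.IntegrableOn (fun s : ℝ => c * s ^ (-γ)) (Set.Ioc 0 1) := by
      apply MeasureTheory.Integrable.const_mul
      have := (intervalIntegral.intervalIntegrable_rpow' (a := 0) (b := 1) (r := -γ)
        (by linarith)).1
      exact (by simpa using this : MeasureTheory.IntegrableOn (fun x : ℝ => x ^ (-γ)) (Set.Ioc 0 1))
    apply MeasureTheory.Integrable.mono hg
    · exact (hmeas.mono (Set.Ioc_subset_Ioi_self)).aestronglyMeasurable measurableSet_Ioc
    · rw [MeasureTheory.ae_restrict_iff' measurableSet_Ioc]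
      filter_upwards with s hs
      have hs0 : (0:ℝ) < s := hs.1
      have hrp : (0:ℝ) < s ^ (1+γ) := Real.rpow_pos_of_pos hs0 _
      rw [Real.norm_eq_abs, Real.norm_eq_abs, abs_div, abs_of_pos hrp]
      have h1 : |h s| ≤ c * s := by
        have := hb s hs0
        rwa [min_eq_left hs.2] at this
      have h2 : c * s / s ^ (1+γ) = c * s ^ (-γ) := by
        rw [mul_div_assoc]
        congr 1
        rw [show (-γ) = 1 - (1+γ) by ring, Real.rpow_sub hs0, Real.rpow_one]
      rw [abs_of_nonneg (by positivity : (0:ℝ) ≤ c * s ^ (-γ)), ← h2]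
      exact div_le_div_of_nonneg_right h1 hrp.le
  · -- on Ioi 1, dominate by c * s^(-(1+γ))
    have hg : MeasureTheory.IntegrableOn (fun s : ℝ => c * s ^ (-(1+γ))) (Set.Ioi 1) := by
      apply MeasureTheory.Integrable.const_mul
      exact integrableOn_Ioi_rpow_of_lt (by linarith) one_pos
    apply MeasureTheory.Integrable.mono hg
    · exact (hmeas.mono (Set.Ioi_subset_Ioi zero_le_one)).aestronglyMeasurable measurableSet_Ioi
    · rw [MeasureTheory.ae_restrict_iff' measurableSet_Ioi]
      filter_upwards with s hs
      have hs0 : (0:ℝ) < s := lt_trans one_pos hs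
      have hrp : (0:ℝ) < s ^ (1+γ) := Real.rpow_pos_of_pos hs0 _
      rw [Real.norm_eq_abs, Real.norm_eq_abs, abs_div, abs_of_pos hrp]
      have h1 : |h s| ≤ c := by
        have := hb s hs0
        rwa [min_eq_right (le_of_lt hs), mul_one] at this
      have h2 : c / s ^ (1+γ) = c * s ^ (-(1+γ)) := by
        rw [Real.rpow_neg hs0.le, div_eq_mul_inv]
      rw [abs_of_nonneg (by positivity : (0:ℝ) ≤ c * s ^ (-(1+γ))), ← h2]
      exact div_le_div_of_nonneg_right h1 hrp.le

-- bound: 1 - exp(-x) ≤ x for x, and ≥ 0 for x ≥ 0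
lemma one_sub_exp_neg_le (x : ℝ) : 1 - Real.exp (-x) ≤ x := by
  have := Real.add_one_le_exp (-x)
  nlinarith [Real.exp_pos (-x)]

lemma one_sub_exp_neg_nonneg {x : ℝ} (hx : 0 ≤ x) : 0 ≤ 1 - Real.exp (-x) := by
  have : Real.exp (-x) ≤ Real.exp 0 := Real.exp_le_exp.mpr (by linarith)
  simpa using this

lemma aux_I1 {γ : ℝ} (hγ0 : 0 < γ) (hγ1 : γ < 1)
    (hint : MeasureTheory.IntegrableOn (fun s : ℝ => (1 - Real.exp (-s)) / s ^ (1+γ)) (Set.Ioi 0)) :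
    ∫ s in Set.Ioi (0:ℝ), (1 - Real.exp (-s)) / s ^ (1+γ) = Real.Gamma (1-γ) / γ := by
  set f : ℝ → ℝ := fun s => -((1 - Real.exp (-s)) * s ^ (-γ)) / γ with hf
  set f' : ℝ → ℝ := fun s => (1 - Real.exp (-s)) / s ^ (1+γ) - Real.exp (-s) * s ^ (-γ) / γ
    with hf'
  have hGint : MeasureTheory.IntegrableOn (fun s : ℝ => Real.exp (-s) * s ^ ((1-γ)-1)) (Set.Ioi 0) :=
    Real.GammaIntegral_convergent (by linarith)
  have hexp : ((1:ℝ)-γ)-1 = -γ := by ring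
  rw [hexp] at hGint
  have hderiv : ∀ x ∈ Set.Ioi (0:ℝ), HasDerivAt f (f' x) x := by
    intro x hx
    have hx0 : (0:ℝ) < x := hx
    have h1 : HasDerivAt (fun s : ℝ => 1 - Real.exp (-s)) (Real.exp (-x)) x := by
      have := ((Real.hasDerivAt_exp (-x)).comp x (hasDerivAt_neg x)).const_sub 1
      simpa using this
    have h2 : HasDerivAt (fun s : ℝ => s ^ (-γ)) (-γ * x ^ (-γ-1)) x :=
      Real.hasDerivAt_rpow_const (Or.inl hx0.ne')
    have h3 := ((h1.mul h2).neg).div_const γ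
    convert h3 using 1
    case e'_4 => rfl
    case e'_5 => rfl
    case e'_8 => rfl
    have e1 : x ^ (-γ-1) = (x ^ (1+γ))⁻¹ := by
      rw [show -γ-1 = -(1+γ) by ring, Real.rpow_neg hx0.le]
    simp only [hf']
    rw [e1]
    field_simp
    ring
  have hcont : ContinuousWithinAt f (Set.Ici 0) 0 := by
    have hf0 : f 0 = 0 := by simp [hf]
    rw [ContinuousWithinAt, hf0]
    have hbound : ∀ s ∈ Set.Ici (0:ℝ), ‖f s‖ ≤ s ^ (1-γ) / γ := by
      intro s hs
      rcases eq_or_lt_of_le (Set.mem_Ici.mp hs) with h | h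
      · simp [f, ← h, Real.zero_rpow (by linarith : (1:ℝ)-γ ≠ 0)]
      · have h1 : 0 ≤ 1 - Real.exp (-s) := one_sub_exp_neg_nonneg hs
        have h2 : (1 - Real.exp (-s)) * s ^ (-γ) ≤ s * s ^ (-γ) :=
          mul_le_mul_of_nonneg_right (one_sub_exp_neg_le s) (Real.rpow_nonneg hs _)
        have h3 : s * s ^ (-γ) = s ^ (1-γ) := by
          rw [Real.rpow_sub h, Real.rpow_one, Real.rpow_neg h.le]
          field_simp
        rw [Real.norm_eq_abs, hf]
        rw [abs_div, abs_of_pos hγ0, abs_neg, abs_of_nonneg (by positivity)]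
        apply div_le_div_of_nonneg_right _ hγ0.le
        rw [← h3]; exact h2
    have hg : Tendsto (fun s : ℝ => s ^ (1-γ) / γ) (nhdsWithin 0 (Set.Ici 0)) (nhds 0) := by
      have : ContinuousAt (fun s : ℝ => s ^ (1-γ)) 0 :=
        Real.continuousAt_rpow_const 0 (1-γ) (Or.inr (by linarith))
      have h0 : (0:ℝ) ^ ((1:ℝ)-γ) = 0 := Real.zero_rpow (by linarith)
      have := (this.continuousWithinAt (s := Set.Ici 0)).div_const γ
      rw [ContinuousWithinAt] at this
      simpa [h0] using this
    apply squeeze_zero_norm' _ hg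
    filter_upwards [self_mem_nhdsWithin] with s hs using hbound s hs
  have htop : Tendsto f atTop (nhds 0) := by
    have h1 : Tendsto (fun s : ℝ => 1 - Real.exp (-s)) atTop (nhds 1) := by
      have : Tendsto (fun s : ℝ => Real.exp (-s)) atTop (nhds 0) :=
        Real.tendsto_exp_neg_atTop_nhds_zero
      simpa using (tendsto_const_nhds (x := (1:ℝ))).sub this
    have h2 : Tendsto (fun s : ℝ => (s:ℝ) ^ (-γ)) atTop (nhds 0) :=
      tendsto_rpow_neg_atTop hγ0
    have := ((h1.mul h2).neg).div_const γ
    simpa using this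
  have hf'int : MeasureTheory.IntegrableOn f' (Set.Ioi 0) := by
    exact hint.sub (hGint.div_const γ)
  have key := MeasureTheory.integral_Ioi_of_hasDerivAt_of_tendsto hcont hderiv hf'int htop
  have hf0 : f 0 = 0 := by simp [hf]
  rw [hf0, sub_zero] at key
  have hsplit : ∫ s in Set.Ioi (0:ℝ), f' s
      = (∫ s in Set.Ioi (0:ℝ), (1 - Real.exp (-s)) / s ^ (1+γ))
        - ∫ s in Set.Ioi (0:ℝ), Real.exp (-s) * s ^ (-γ) / γ := by
    exact MeasureTheory.integral_sub hint (hGint.div_const γ)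
  have hGam : ∫ s in Set.Ioi (0:ℝ), Real.exp (-s) * s ^ (-γ) / γ = Real.Gamma (1-γ) / γ := by
    rw [MeasureTheory.integral_div]
    congr 1
    rw [Real.Gamma_eq_integral (by linarith : (0:ℝ) < 1-γ), hexp]
  rw [key, hGam] at hsplit
  linarith [hsplit]

lemma aux_intc {γ : ℝ} (hγ0 : 0 < γ) (hγ1 : γ < 1) {c : ℝ} (hc : 1 ≤ c) :
    MeasureTheory.IntegrableOn (fun s : ℝ => (1 - Real.exp (-(c*s))) / s ^ (1+γ)) (Set.Ioi 0) := by
  have hc0 : (0:ℝ) < c := lt_of_lt_of_le one_pos hc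
  apply aux_integrable hγ0 hγ1 hc0.le
  · fun_prop
  · intro s hs
    have hs0 : (0:ℝ) < s := hs
    have h1 : 0 ≤ 1 - Real.exp (-(c*s)) := one_sub_exp_neg_nonneg (by positivity)
    rw [abs_of_nonneg h1]
    rcases le_total s 1 with h | h
    · rw [min_eq_left h]
      exact one_sub_exp_neg_le (c*s)
    · rw [min_eq_right h, mul_one]
      have : Real.exp (-(c*s)) > 0 := Real.exp_pos _
      linarith
lemma aux_Ic {γ : ℝ} (hγ0 : 0 < γ) (hγ1 : γ < 1) {c : ℝ} (hc : 0 < c)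
    (hI1 : ∫ s in Set.Ioi (0:ℝ), (1 - Real.exp (-s)) / s ^ (1+γ) = Real.Gamma (1-γ) / γ) :
    ∫ s in Set.Ioi (0:ℝ), (1 - Real.exp (-(c*s))) / s ^ (1+γ)
      = c ^ γ * (Real.Gamma (1-γ) / γ) := by
  have key := MeasureTheory.integral_comp_mul_left_Ioi
    (fun t : ℝ => (1 - Real.exp (-t)) / t ^ (1+γ)) 0 hc
  rw [mul_zero] at key
  have hLHS : ∫ x in Set.Ioi (0:ℝ), (1 - Real.exp (-(c*x))) / (c*x) ^ (1+γ)
      = (c ^ (1+γ))⁻¹ * ∫ x in Set.Ioi (0:ℝ), (1 - Real.exp (-(c*x))) / x ^ (1+γ) := by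
    rw [← MeasureTheory.integral_const_mul]
    apply MeasureTheory.setIntegral_congr_fun measurableSet_Ioi
    intro x hx
    have hx0 : (0:ℝ) < x := hx
    simp only []
    rw [Real.mul_rpow hc.le hx0.le]
    field_simp
  rw [hLHS, hI1, smul_eq_mul] at key
  have hne : (c ^ ((1:ℝ)+γ)) ≠ 0 := (Real.rpow_pos_of_pos hc _).ne'
  have : (∫ x in Set.Ioi (0:ℝ), (1 - Real.exp (-(c*x))) / x ^ (1+γ))
      = c ^ (1+γ) * (c⁻¹ * (Real.Gamma (1-γ)/γ)) := by
    field_simp at key ⊢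
    linarith [key]
  rw [this, ← mul_assoc]
  congr 1
  rw [← Real.rpow_neg_one c, ← Real.rpow_add hc]
  ring_nf

lemma binom_id (m : ℕ) (hm : 1 ≤ m) (x : ℝ) :
    (1-x)^m = ∑ k ∈ Finset.range (m+1), (-1:ℝ)^(k+1) * (m.choose k) * (1 - x^k) := by
  have h1 : ((-x) + 1)^m = ∑ k ∈ Finset.range (m+1), (-x)^k * 1^(m-k) * (m.choose k) :=
    add_pow (-x) 1 m
  have h2 : ((-1:ℝ) + 1)^m = ∑ k ∈ Finset.range (m+1), (-1:ℝ)^k * 1^(m-k) * (m.choose k) :=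
    add_pow (-1) 1 m
  simp only [one_pow, mul_one, neg_add_cancel, zero_pow (Nat.one_le_iff_ne_zero.mp hm)] at h1 h2
  have : ∑ k ∈ Finset.range (m+1), (-1:ℝ)^(k+1) * (m.choose k) * (1 - x^k)
      = ∑ k ∈ Finset.range (m+1), ((-1:ℝ)^k * x^k * (m.choose k) - (-1:ℝ)^k * (m.choose k)) := by
    apply Finset.sum_congr rfl
    intro k _
    ring
  rw [this, Finset.sum_sub_distrib, ← h2]
  have : ∑ k ∈ Finset.range (m+1), (-1:ℝ)^k * x^k * (m.choose k)
      = ∑ k ∈ Finset.range (m+1), (-x)^k * (m.choose k) := by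
    apply Finset.sum_congr rfl; intro k _; rw [neg_pow]; ring
  rw [this, ← h1]
  ring_nf

lemma comb_id {γ : ℝ} (hγ0 : 0 < γ) (hγ1 : γ < 1) (n : ℕ) :
    (-(1:ℝ)/(n+1)) * ∑ k ∈ Finset.range (n+2), (-1:ℝ)^(k+1) * ((n+1).choose k) * ((k:ℝ)^γ)
      = ∑ k ∈ Finset.range (n+1), (-1:ℝ)^(k+1) / ((k+1:ℕ):ℝ)^(1-γ) * (n.choose k) := by
  rw [Finset.sum_range_succ']
  simp only [Nat.cast_zero, Real.zero_rpow hγ0.ne', mul_zero, add_zero]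
  rw [Finset.mul_sum]
  apply Finset.sum_congr rfl
  intro j hj
  have hj1 : (0:ℝ) < (j:ℝ)+1 := by positivity
  have hch : ((n:ℝ)+1) * (n.choose j) = ((n+1).choose (j+1)) * ((j:ℝ)+1) := by
    have := Nat.add_one_mul_choose_eq n j
    exact_mod_cast congrArg (Nat.cast : ℕ → ℝ) this
  have hAB : ((j:ℝ)+1)^γ * ((j:ℝ)+1)^(1-γ) = (j:ℝ)+1 := by
    rw [← Real.rpow_add hj1]
    norm_num
  have hB : (0:ℝ) < ((j:ℝ)+1)^(1-γ) := Real.rpow_pos_of_pos hj1 _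
  have hn1 : (0:ℝ) < (n:ℝ)+1 := by positivity
  have key : ((-1:ℝ)^(j+1)) * (((n+1).choose (j+1):ℝ)) * (((j:ℝ)+1)^γ) * (((j:ℝ)+1)^(1-γ))
      = ((-1:ℝ)^(j+1)) * ((n.choose j:ℝ)) * ((n:ℝ)+1) := by
    linear_combination ((-1:ℝ)^(j+1) * (((n+1).choose (j+1)):ℝ)) * hAB
      - ((-1:ℝ)^(j+1)) * hch
  push_cast
  rw [pow_succ ((-1:ℝ)) (j+1)]
  field_simp
  linear_combination ((n+1).choose (j+1) : ℝ) * hAB - hch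

lemma aux_J {γ : ℝ} (hγ0 : 0 < γ) (hγ1 : γ < 1) (m : ℕ) (hm : 1 ≤ m)
    (hI1 : ∫ s in Set.Ioi (0:ℝ), (1 - Real.exp (-s)) / s ^ (1+γ) = Real.Gamma (1-γ) / γ) :
    ∫ s in Set.Ioi (0:ℝ), (1 - Real.exp (-s))^m / s ^ (1+γ)
      = ∑ k ∈ Finset.range (m+1),
          (-1:ℝ)^(k+1) * (m.choose k) * ((k:ℝ)^γ * (Real.Gamma (1-γ) / γ)) := by
  have hfun : (fun s : ℝ => (1 - Real.exp (-s))^m / s ^ (1+γ))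
      = fun s : ℝ => ∑ k ∈ Finset.range (m+1),
          (-1:ℝ)^(k+1) * (m.choose k) * ((1 - Real.exp (-((k:ℝ)*s))) / s ^ (1+γ)) := by
    funext s
    have hexpk : ∀ k : ℕ, (Real.exp (-s))^k = Real.exp (-((k:ℝ)*s)) := by
      intro k
      rw [← Real.exp_nat_mul]
      congr 1
      ring
    rw [binom_id m hm (Real.exp (-s)), Finset.sum_div]
    apply Finset.sum_congr rfl
    intro k _
    rw [hexpk k]
    ring
  rw [hfun]
  have hint : ∀ k ∈ Finset.range (m+1), MeasureTheory.IntegrableOn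
      (fun s : ℝ => (-1:ℝ)^(k+1) * (m.choose k) * ((1 - Real.exp (-((k:ℝ)*s))) / s ^ (1+γ)))
      (Set.Ioi 0) := by
    intro k _
    rcases Nat.eq_zero_or_pos k with rfl | hk
    · have : (fun s : ℝ => (-1:ℝ)^(0+1) * (m.choose 0) * ((1 - Real.exp (-((0:ℕ):ℝ)*s)) / s ^ (1+γ)))
          = fun _ : ℝ => 0 := by
        funext s
        norm_num
      simpa [this] using (MeasureTheory.integrable_zero _ _ _)
    · exact ((aux_intc hγ0 hγ1 (by exact_mod_cast hk : (1:ℝ) ≤ (k:ℝ))).const_mul _)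
  rw [MeasureTheory.integral_finset_sum _ hint]
  apply Finset.sum_congr rfl
  intro k _
  rw [MeasureTheory.integral_const_mul]
  congr 1
  rcases Nat.eq_zero_or_pos k with rfl | hk
  · simp [Real.zero_rpow hγ0.ne']
  · exact aux_Ic hγ0 hγ1 (by exact_mod_cast hk : (0:ℝ) < (k:ℝ)) hI1

/-- For `γ ∈ (0,1)` and `λ < log 2`, the function
`Λ_γ(λ) = −λ + (γ/Γ(1−γ)) ∫₀^∞ log[1 + (e^λ − 1)(1 − e^{−s})] s^{−(1+γ)} ds`
admits the expansion
`Λ_γ(λ) = −λ + Σ_{n=1}^∞ (1 − e^λ)^n Σ_{k=1}^n ((−1)^k / k^{1−γ}) C(n−1,k−1)`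
(below, the outer sum over `n : ℕ` represents `n+1 = 1, 2, …` and the inner sum over
`k ∈ range (n+1)` represents `k+1 = 1, …, n+1`). -/
theorem Lambda_gamma_expansion
    (γ : ℝ) (hγ0 : 0 < γ) (hγ1 : γ < 1)
    (Λ : ℝ → ℝ)
    (hΛ : ∀ l : ℝ, Λ l = -l + γ / Real.Gamma (1 - γ) *
      ∫ s in Set.Ioi (0 : ℝ),
        Real.log (1 + (Real.exp l - 1) * (1 - Real.exp (-s))) / s ^ (1 + γ))
    (l : ℝ) (hl : l < Real.log 2) :
    Λ l = -l + ∑' n : ℕ, (1 - Real.exp l) ^ (n + 1) *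
      ∑ k ∈ Finset.range (n + 1),
        (-1 : ℝ) ^ (k + 1) / ((k + 1 : ℕ) : ℝ) ^ (1 - γ) * (n.choose k) := by
  have hΓ : (0:ℝ) < Real.Gamma (1-γ) := Real.Gamma_pos_of_pos (by linarith)
  set u : ℝ := 1 - Real.exp l with hu_def
  have hu : |u| < 1 := by
    rw [abs_lt]
    constructor
    · have : Real.exp l < 2 := by
        calc Real.exp l < Real.exp (Real.log 2) := Real.exp_lt_exp.mpr hl
        _ = 2 := Real.exp_log (by norm_num)
      simp only [hu_def]; linarith
    · have := Real.exp_pos l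
      simp only [hu_def]; linarith
  -- basic facts about a s = 1 - exp (-s)
  have ha0 : ∀ s : ℝ, 0 < s → 0 ≤ 1 - Real.exp (-s) := fun s hs =>
    one_sub_exp_neg_nonneg hs.le
  have ha1 : ∀ s : ℝ, 0 < s → 1 - Real.exp (-s) ≤ 1 := fun s hs => by
    have := Real.exp_pos (-s); linarith
  -- integrability of (1-e^{-s})/s^{1+γ}
  have hint1 : MeasureTheory.IntegrableOn
      (fun s : ℝ => (1 - Real.exp (-s)) / s ^ (1+γ)) (Set.Ioi 0) := by
    have := aux_intc hγ0 hγ1 (le_refl (1:ℝ))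
    simpa only [one_mul] using this
  have hI1 := aux_I1 hγ0 hγ1 hint1
  -- the series functions
  set F : ℕ → ℝ → ℝ := fun n s =>
    -((u * (1 - Real.exp (-s)))^(n+1) / ((n:ℝ)+1)) / s ^ (1+γ) with hF_def
  -- F n as a constant multiple
  have hF_eq : ∀ n : ℕ, F n = fun s =>
      (-u^(n+1) / ((n:ℝ)+1)) * ((1 - Real.exp (-s))^(n+1) / s ^ (1+γ)) := by
    intro n
    funext s
    simp only [hF_def]
    rw [mul_pow]
    ring
  -- integrability of the powers
  have hpow_int : ∀ n : ℕ, MeasureTheory.IntegrableOn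
      (fun s : ℝ => (1 - Real.exp (-s))^(n+1) / s ^ (1+γ)) (Set.Ioi 0) := by
    intro n
    apply aux_integrable hγ0 hγ1 (zero_le_one) (by fun_prop)
    intro s hs
    have hs0 : (0:ℝ) < s := hs
    have h0 := ha0 s hs0
    have h1 := ha1 s hs0
    rw [one_mul, abs_of_nonneg (pow_nonneg h0 _)]
    apply le_min
    · calc (1 - Real.exp (-s))^(n+1) ≤ (1 - Real.exp (-s))^1 :=
        pow_le_pow_of_le_one h0 h1 (by omega)
      _ = 1 - Real.exp (-s) := pow_one _
      _ ≤ s := one_sub_exp_neg_le s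
    · exact pow_le_one₀ h0 h1
  have hF_int : ∀ n : ℕ, MeasureTheory.IntegrableOn (F n) (Set.Ioi 0) := by
    intro n
    rw [hF_eq n]
    exact (hpow_int n).const_mul _
  -- the dominating function
  have hC_int : MeasureTheory.IntegrableOn
      (fun s : ℝ => min s 1 / s ^ (1+γ)) (Set.Ioi 0) := by
    apply aux_integrable hγ0 hγ1 (zero_le_one) (by fun_prop)
    intro s hs
    have hs0 : (0:ℝ) < s := hs
    rw [one_mul, abs_of_nonneg (le_min hs0.le zero_le_one)]
  set C : ℝ := ∫ s in Set.Ioi (0:ℝ), min s 1 / s ^ (1+γ) with hC_def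
  -- norm bound for the integrals
  have hnorm_le : ∀ n : ℕ,
      (∫ s in Set.Ioi (0:ℝ), ‖F n s‖) ≤ |u|^(n+1) * C := by
    intro n
    have hgint : MeasureTheory.IntegrableOn
        (fun s : ℝ => |u|^(n+1) * (min s 1 / s ^ (1+γ))) (Set.Ioi 0) :=
      hC_int.const_mul _
    have hmono := MeasureTheory.setIntegral_mono_on ((hF_int n).norm) hgint
      measurableSet_Ioi ?_
    · rw [MeasureTheory.integral_const_mul] at hmono
      exact hmono
    · intro s hs
      have hs0 : (0:ℝ) < s := hs
      have h0 := ha0 s hs0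
      have h1 := ha1 s hs0
      have hrp : (0:ℝ) < s ^ (1+γ) := Real.rpow_pos_of_pos hs0 _
      have hmin : (1 - Real.exp (-s))^(n+1) ≤ min s 1 := by
        apply le_min
        · calc (1 - Real.exp (-s))^(n+1) ≤ (1 - Real.exp (-s))^1 :=
            pow_le_pow_of_le_one h0 h1 (by omega)
          _ = 1 - Real.exp (-s) := pow_one _
          _ ≤ s := one_sub_exp_neg_le s
        · exact pow_le_one₀ h0 h1
      have habs : ‖F n s‖ = |u|^(n+1) * (1 - Real.exp (-s))^(n+1) / ((n:ℝ)+1) / s ^ (1+γ) := by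
        simp only [hF_def]
        rw [Real.norm_eq_abs, abs_div, abs_neg, abs_div, abs_pow, abs_mul,
          abs_of_nonneg h0, abs_of_pos hrp, abs_of_pos (by positivity : (0:ℝ) < (n:ℝ)+1),
          mul_pow]
      rw [habs]
      have hn1 : (1:ℝ) ≤ (n:ℝ)+1 := le_add_of_nonneg_left n.cast_nonneg
      calc |u|^(n+1) * (1 - Real.exp (-s))^(n+1) / ((n:ℝ)+1) / s ^ (1+γ)
          ≤ |u|^(n+1) * (1 - Real.exp (-s))^(n+1) / 1 / s ^ (1+γ) := by
            gcongr
        _ = |u|^(n+1) * (1 - Real.exp (-s))^(n+1) / s ^ (1+γ) := by rw [div_one]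
        _ ≤ |u|^(n+1) * min s 1 / s ^ (1+γ) := by
            gcongr
        _ = |u|^(n+1) * (min s 1 / s ^ (1+γ)) := by rw [mul_div_assoc]
  -- summability of the norm integrals
  have hsum : Summable (fun n : ℕ => ∫ s in Set.Ioi (0:ℝ), ‖F n s‖) := by
    apply Summable.of_nonneg_of_le
      (fun n => MeasureTheory.integral_nonneg (fun s => norm_nonneg _))
      (fun n => hnorm_le n)
    have : Summable (fun n : ℕ => |u|^n) :=
      summable_geometric_of_lt_one (abs_nonneg u) hu
    apply Summable.congr ((this.mul_left (|u| * C)))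
    intro n
    rw [pow_succ]
    ring
  -- the pointwise series expansion of the log
  have heq : ∀ s ∈ Set.Ioi (0:ℝ),
      Real.log (1 + (Real.exp l - 1) * (1 - Real.exp (-s))) / s ^ (1+γ)
        = ∑' n : ℕ, F n s := by
    intro s hs
    have hs0 : (0:ℝ) < s := hs
    have h0 := ha0 s hs0
    have h1 := ha1 s hs0
    set x : ℝ := u * (1 - Real.exp (-s)) with hx_def
    have hx : |x| < 1 := by
      rw [hx_def, abs_mul, abs_of_nonneg h0]
      calc |u| * (1 - Real.exp (-s)) ≤ |u| * 1 :=
        mul_le_mul_of_nonneg_left h1 (abs_nonneg u)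
      _ = |u| := mul_one _
      _ < 1 := hu
    have hlog : 1 + (Real.exp l - 1) * (1 - Real.exp (-s)) = 1 - x := by
      simp only [hx_def, hu_def]
      ring
    have hS := hasSum_pow_div_log_of_abs_lt_one hx
    have hS2 : HasSum (fun n : ℕ => -(x^(n+1) / ((n:ℝ)+1)))
        (Real.log (1 - x)) := by
      simpa using hS.neg
    have hS3 := hS2.div_const (s ^ (1+γ))
    rw [hlog]
    exact (hS3.tsum_eq).symm
  -- interchange sum and integral
  have hswap : (∫ s in Set.Ioi (0:ℝ),
        Real.log (1 + (Real.exp l - 1) * (1 - Real.exp (-s))) / s ^ (1+γ))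
      = ∑' n : ℕ, ∫ s in Set.Ioi (0:ℝ), F n s := by
    rw [MeasureTheory.setIntegral_congr_fun measurableSet_Ioi heq]
    exact (MeasureTheory.integral_tsum_of_summable_integral_norm hF_int hsum).symm
  -- the value of each integral
  have hFval : ∀ n : ℕ, (∫ s in Set.Ioi (0:ℝ), F n s)
      = (-u^(n+1) / ((n:ℝ)+1)) *
        ((∑ k ∈ Finset.range (n+2), (-1:ℝ)^(k+1) * ((n+1).choose k) * ((k:ℝ)^γ))
          * (Real.Gamma (1-γ) / γ)) := by
    intro n
    rw [hF_eq n, MeasureTheory.integral_const_mul, aux_J hγ0 hγ1 (n+1) (by omega) hI1]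
    congr 1
    rw [Finset.sum_mul]
    apply Finset.sum_congr rfl
    intro k _
    ring
  rw [hΛ l, hswap, tsum_mul_left.symm]
  congr 1
  apply tsum_congr
  intro n
  rw [hFval n]
  have hcomb := comb_id hγ0 hγ1 n
  rw [← hcomb]
  have hcancel : γ / Real.Gamma (1-γ) * (Real.Gamma (1-γ) / γ) = 1 := by
    field_simp
  set S : ℝ := ∑ k ∈ Finset.range (n+2), (-1:ℝ)^(k+1) * ((n+1).choose k) * ((k:ℝ)^γ)
  calc γ / Real.Gamma (1-γ) * ((-u^(n+1) / ((n:ℝ)+1)) * (S * (Real.Gamma (1-γ) / γ)))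
      = (γ / Real.Gamma (1-γ) * (Real.Gamma (1-γ) / γ)) * ((-u^(n+1) / ((n:ℝ)+1)) * S) := by
        ring
    _ = (-u^(n+1) / ((n:ℝ)+1)) * S := by rw [hcancel, one_mul]
    _ = u^(n+1) * (-(1:ℝ)/((n:ℝ)+1) * S) := by ring
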